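/- Let X ⊂ ℝ^d be finite spanning ℝ^d, let V be the set of extreme points of conv(X), let θ ∈ ℝ^d, and let x* ∈ V be such that (x* − x)ᵀθ > 0 for all x ∈ X \ {x*}. Assume conv(X) ⊆ x* + cone({y − x* : y ∈ I}) where I is the set of extreme points adjacent to x*. Then for any positive definite matrix M, max over x ∈ X \ {x*} of ‖x* − x‖²_M / ((x* − x)ᵀθ)² equals max over x' ∈ I of ‖x* − x'‖²_M / ((x* − x')ᵀθ)². -/

import Mathlib

open Matrix

/-- The set of maximizers of `y ↦ y ⬝ᵥ w` over `P`. -/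
def argmaxSet {d : ℕ} (P : Set (Fin d → ℝ)) (w : Fin d → ℝ) : Set (Fin d → ℝ) :=
  {y ∈ P | ∀ z ∈ P, z ⬝ᵥ w ≤ y ⬝ᵥ w}

/-- `x` is an extreme point (vertex) of the polytope `conv X`. -/
def IsExtremePt {d : ℕ} (X : Finset (Fin d → ℝ)) (x : Fin d → ℝ) : Prop :=
  x ∈ X ∧ ∃ w : Fin d → ℝ, argmaxSet (convexHull ℝ (X : Set (Fin d → ℝ))) w = {x}

/-- Two distinct extreme points are adjacent if the segment joining them is
the argmax set of some linear functional. -/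
def AdjacentPts {d : ℕ} (X : Finset (Fin d → ℝ)) (x x' : Fin d → ℝ) : Prop :=
  IsExtremePt X x ∧ IsExtremePt X x' ∧ x ≠ x' ∧
    ∃ w : Fin d → ℝ,
      argmaxSet (convexHull ℝ (X : Set (Fin d → ℝ))) w = convexHull ℝ {x, x'}

lemma sum_dotProduct' {d : ℕ} {ι : Type*} (A : Finset ι) (f : ι → (Fin d → ℝ))
    (w : Fin d → ℝ) : (∑ i ∈ A, f i) ⬝ᵥ w = ∑ i ∈ A, f i ⬝ᵥ w := by
  classical
  induction A using Finset.cons_induction with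
  | empty => simp
  | cons i s hi ih => rw [Finset.sum_cons, Finset.sum_cons, add_dotProduct, ih]

lemma mulVec_sum' {d : ℕ} {ι : Type*} (A : Finset ι) (M : Matrix (Fin d) (Fin d) ℝ)
    (f : ι → (Fin d → ℝ)) : M *ᵥ (∑ i ∈ A, f i) = ∑ i ∈ A, M *ᵥ f i := by
  classical
  induction A using Finset.cons_induction with
  | empty => simp
  | cons i s hi ih => rw [Finset.sum_cons, Finset.sum_cons, mulVec_add, ih]

lemma dotProduct_sum' {d : ℕ} {ι : Type*} (A : Finset ι) (u : Fin d → ℝ)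
    (f : ι → (Fin d → ℝ)) : u ⬝ᵥ (∑ i ∈ A, f i) = ∑ i ∈ A, u ⬝ᵥ f i := by
  classical
  induction A using Finset.cons_induction with
  | empty => simp
  | cons i s hi ih => rw [Finset.sum_cons, Finset.sum_cons, dotProduct_add, ih]

lemma aux_inv_inv (a b : ℝ) (ha : a ≠ 0) : a⁻¹ * (a⁻¹ * b) = b / a ^ 2 := by
  field_simp

lemma aux_div (a b c : ℝ) (hb : b ≠ 0) (hc : c ≠ 0) :
    (a * b / c) * b⁻¹ = c⁻¹ * a := by
  field_simp

lemma psd_nonneg {d : ℕ} {M : Matrix (Fin d) (Fin d) ℝ} (hM : M.PosSemidef)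
    (u : Fin d → ℝ) : 0 ≤ u ⬝ᵥ M *ᵥ u := by
  simpa using hM.dotProduct_mulVec_nonneg u

lemma psd_symm {d : ℕ} {M : Matrix (Fin d) (Fin d) ℝ} (hM : M.IsHermitian)
    (u w : Fin d → ℝ) : u ⬝ᵥ M *ᵥ w = w ⬝ᵥ M *ᵥ u := by
  have hMT : Mᵀ = M := by
    have := hM; rwa [Matrix.IsHermitian, conjTranspose_eq_transpose_of_trivial] at this
  calc u ⬝ᵥ M *ᵥ w = u ᵥ* M ⬝ᵥ w := by rw [Matrix.dotProduct_mulVec]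
    _ = (Mᵀ *ᵥ u) ⬝ᵥ w := by rw [Matrix.mulVec_transpose]
    _ = w ⬝ᵥ M *ᵥ u := by rw [hMT, dotProduct_comm]

/-- Jensen-type bound: the quadratic form of a convex combination is at most the max. -/
lemma jensen_max {d : ℕ} {M : Matrix (Fin d) (Fin d) ℝ} (hM : M.PosSemidef)
    {ι : Type*} (A : Finset ι) (β : ι → ℝ) (v : ι → (Fin d → ℝ)) (C : ℝ)
    (hβ : ∀ i ∈ A, 0 ≤ β i) (hsum : ∑ i ∈ A, β i = 1)
    (hv : ∀ i ∈ A, v i ⬝ᵥ M *ᵥ v i ≤ C) :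
    (∑ i ∈ A, β i • v i) ⬝ᵥ M *ᵥ (∑ i ∈ A, β i • v i) ≤ C := by
  have hpair : ∀ i ∈ A, ∀ j ∈ A, v i ⬝ᵥ M *ᵥ v j ≤ C := by
    intro i hi j hj
    have h0 : 0 ≤ (v i - v j) ⬝ᵥ M *ᵥ (v i - v j) := psd_nonneg hM _
    have hexp : (v i - v j) ⬝ᵥ M *ᵥ (v i - v j)
        = v i ⬝ᵥ M *ᵥ v i - 2 * (v i ⬝ᵥ M *ᵥ v j) + v j ⬝ᵥ M *ᵥ v j := by
      rw [Matrix.mulVec_sub, sub_dotProduct, dotProduct_sub,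
        dotProduct_sub, psd_symm hM.1 (v j) (v i)]
      ring
    have := hv i hi
    have := hv j hj
    linarith [hexp ▸ h0]
  have hexpand : (∑ i ∈ A, β i • v i) ⬝ᵥ M *ᵥ (∑ i ∈ A, β i • v i)
      = ∑ i ∈ A, ∑ j ∈ A, β i * β j * (v i ⬝ᵥ M *ᵥ v j) := by
    rw [sum_dotProduct']
    refine Finset.sum_congr rfl fun i hi => ?_
    rw [smul_dotProduct, mulVec_sum', dotProduct_sum', smul_eq_mul,
      Finset.mul_sum]
    refine Finset.sum_congr rfl fun j hj => ?_
    rw [Matrix.mulVec_smul, dotProduct_smul, smul_eq_mul]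
    ring
  rw [hexpand]
  calc ∑ i ∈ A, ∑ j ∈ A, β i * β j * (v i ⬝ᵥ M *ᵥ v j)
      ≤ ∑ i ∈ A, ∑ j ∈ A, β i * β j * C := by
        refine Finset.sum_le_sum fun i hi => Finset.sum_le_sum fun j hj => ?_
        exact mul_le_mul_of_nonneg_left (hpair i hi j hj)
          (mul_nonneg (hβ i hi) (hβ j hj))
    _ = C := by
        have h2 : ∑ i ∈ A, ∑ j ∈ A, β i * β j * C
            = ((∑ i ∈ A, β i) * ∑ j ∈ A, β j) * C := by
          rw [Finset.sum_mul_sum, Finset.sum_mul]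
          exact Finset.sum_congr rfl fun i _ => by rw [Finset.sum_mul]
        rw [h2, hsum, one_mul, one_mul]

theorem stmt19 {d : ℕ} (X : Finset (Fin d → ℝ))
    (hspan : Submodule.span ℝ (X : Set (Fin d → ℝ)) = ⊤)
    (θ xs : Fin d → ℝ) (hxs : IsExtremePt X xs)
    (hgap : ∀ x ∈ X, x ≠ xs → (xs - x) ⬝ᵥ θ > 0)
    (hcone : convexHull ℝ (X : Set (Fin d → ℝ)) ⊆
      {p | ∃ α : (Fin d → ℝ) → ℝ, (∀ z, 0 ≤ α z) ∧
        (∀ z, α z ≠ 0 → AdjacentPts X xs z) ∧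
        p = xs + ∑ z ∈ X, α z • (z - xs)})
    (M : Matrix (Fin d) (Fin d) ℝ) (hM : M.PosDef) :
    sSup ((fun x => ((xs - x) ⬝ᵥ M.mulVec (xs - x)) / ((xs - x) ⬝ᵥ θ) ^ 2) ''
        ((X : Set (Fin d → ℝ)) \ {xs})) =
      sSup ((fun x' => ((xs - x') ⬝ᵥ M.mulVec (xs - x')) / ((xs - x') ⬝ᵥ θ) ^ 2) ''
        {x' | AdjacentPts X xs x'}) := by
  classical
  set f : (Fin d → ℝ) → ℝ :=
    fun x => ((xs - x) ⬝ᵥ M.mulVec (xs - x)) / ((xs - x) ⬝ᵥ θ) ^ 2 with hf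
  have hAdjSub : {x' | AdjacentPts X xs x'} ⊆ ((X : Set (Fin d → ℝ)) \ {xs}) := by
    intro z hz
    exact ⟨hz.2.1.1, fun h => hz.2.2.1 (Set.mem_singleton_iff.1 h).symm⟩
  have hfin1 : (f '' ((X : Set (Fin d → ℝ)) \ {xs})).Finite :=
    (X.finite_toSet.diff (t := {xs})).image f
  have hbdd1 : BddAbove (f '' ((X : Set (Fin d → ℝ)) \ {xs})) := hfin1.bddAbove
  have hfin2 : (f '' {x' | AdjacentPts X xs x'}).Finite :=
    ((X.finite_toSet.diff (t := {xs})).subset hAdjSub).image f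
  have hbdd2 : BddAbove (f '' {x' | AdjacentPts X xs x'}) := hfin2.bddAbove
  -- key pointwise bound
  have key : ∀ x ∈ ((X : Set (Fin d → ℝ)) \ {xs}),
      (∃ z, AdjacentPts X xs z) ∧ f x ≤ sSup (f '' {x' | AdjacentPts X xs x'}) := by
    intro x hx
    obtain ⟨hxX, hxne⟩ := hx
    have hxne' : x ≠ xs := fun h => hxne (Set.mem_singleton_iff.2 h)
    have hxconv : x ∈ convexHull ℝ (X : Set (Fin d → ℝ)) :=
      subset_convexHull ℝ _ hxX
    obtain ⟨α, hα0, hαadj, hxeq⟩ := hcone hxconv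
    set g : (Fin d → ℝ) → ℝ := fun z => (xs - z) ⬝ᵥ θ with hg
    have hT : 0 < g x := hgap x hxX hxne'
    have hs : xs - x = ∑ z ∈ X, α z • (xs - z) := by
      rw [hxeq]
      rw [show xs - (xs + ∑ z ∈ X, α z • (z - xs)) = -∑ z ∈ X, α z • (z - xs) by abel]
      rw [← Finset.sum_neg_distrib]
      exact Finset.sum_congr rfl fun z _ => by rw [← smul_neg, neg_sub]
    have hTsum : g x = ∑ z ∈ X, α z * g z := by
      rw [hg]
      simp only []
      rw [hs, sum_dotProduct']
      exact Finset.sum_congr rfl fun z _ => by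
        rw [smul_dotProduct, smul_eq_mul]
    set A : Finset (Fin d → ℝ) := X.filter (fun z => α z ≠ 0) with hA
    have hadjA : ∀ z ∈ A, AdjacentPts X xs z := fun z hz =>
      hαadj z (Finset.mem_filter.1 hz).2
    have hgA : ∀ z ∈ A, 0 < g z := by
      intro z hz
      have hadj := hadjA z hz
      exact hgap z hadj.2.1.1 (fun h => hadj.2.2.1 h.symm)
    have hTA : g x = ∑ z ∈ A, α z * g z := by
      rw [hTsum]
      exact (Finset.sum_filter_of_ne (fun z _ h => by
        intro h0; exact h (by rw [h0, zero_mul]))).symm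
    have hsA : xs - x = ∑ z ∈ A, α z • (xs - z) := by
      rw [hs]
      exact (Finset.sum_filter_of_ne (fun z _ h => by
        intro h0; exact h (by rw [h0, zero_smul]))).symm
    set β : (Fin d → ℝ) → ℝ := fun z => (α z * g z) / g x with hβ
    set v : (Fin d → ℝ) → (Fin d → ℝ) := fun z => (g z)⁻¹ • (xs - z) with hv
    have hβ0 : ∀ z ∈ A, 0 ≤ β z := fun z hz =>
      div_nonneg (mul_nonneg (hα0 z) (hgA z hz).le) hT.le
    have hβsum : ∑ z ∈ A, β z = 1 := by
      rw [hβ]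
      simp only []
      rw [← Finset.sum_div, ← hTA, div_self hT.ne']
    have hvec : ∑ z ∈ A, β z • v z = (g x)⁻¹ • (xs - x) := by
      rw [hsA, Finset.smul_sum]
      refine Finset.sum_congr rfl fun z hz => ?_
      have hgz : g z ≠ 0 := (hgA z hz).ne'
      rw [smul_smul, smul_smul]
      congr 1
      exact aux_div _ _ _ hgz hT.ne'
    set C := sSup (f '' {x' | AdjacentPts X xs x'}) with hC
    have hCz : ∀ z ∈ A, v z ⬝ᵥ M *ᵥ v z ≤ C := by
      intro z hz
      have hgz : g z ≠ 0 := (hgA z hz).ne'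
      have hval : v z ⬝ᵥ M *ᵥ v z = f z := by
        rw [hv]
        simp only []
        rw [smul_dotProduct, Matrix.mulVec_smul, dotProduct_smul,
          smul_eq_mul, smul_eq_mul, hf]
        exact aux_inv_inv _ _ hgz
      rw [hval]
      exact le_csSup hbdd2 ⟨z, hadjA z hz, rfl⟩
    have hAne : ∃ z, AdjacentPts X xs z := by
      have hne : (∑ z ∈ A, β z) ≠ 0 := by rw [hβsum]; norm_num
      obtain ⟨z, hz, -⟩ := Finset.exists_ne_zero_of_sum_ne_zero hne
      exact ⟨z, hadjA z hz⟩
    refine ⟨hAne, ?_⟩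
    have hjen := jensen_max hM.posSemidef A β v C hβ0 hβsum hCz
    rw [hvec] at hjen
    have hq : ((g x)⁻¹ • (xs - x)) ⬝ᵥ M *ᵥ ((g x)⁻¹ • (xs - x)) = f x := by
      rw [smul_dotProduct, Matrix.mulVec_smul, dotProduct_smul,
        smul_eq_mul, smul_eq_mul, hf]
      exact aux_inv_inv _ _ hT.ne'
    rw [hq] at hjen
    exact hjen
  rcases Set.eq_empty_or_nonempty ((X : Set (Fin d → ℝ)) \ {xs}) with hE | hNE
  · have h2 : {x' | AdjacentPts X xs x'} = ∅ :=
      Set.eq_empty_of_subset_empty (hE ▸ hAdjSub)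
    rw [hE, h2]
  · refine le_antisymm ?_ ?_
    · refine csSup_le (hNE.image f) ?_
      rintro r ⟨x, hx, rfl⟩
      exact (key x hx).2
    · obtain ⟨x0, hx0⟩ := hNE
      obtain ⟨⟨z, hz⟩, -⟩ := key x0 hx0
      exact csSup_le_csSup hbdd1 ⟨f z, z, hz, rfl⟩ (Set.image_mono hAdjSub)
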